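/- arXiv:2604.27987 — 2 statements merged into one kernel-verified Lean document; each statement's English description precedes it below -/
import Mathlib

section
/- Let L_W : ℝⁿ → ℝ be differentiable with M-Lipschitz gradient. Suppose at parameter θ_t the vectors G_W = ∇L_W(θ_t) and G_C satisfy ‖G_W‖² ≥ γ_t²‖G_C‖² with γ_t ∈ (0, 1], and let θ_{t+1} = θ_t − (η/m)(G_W + γ_t G_C) with 0 < η < m/M. Then L_W(θ_{t+1}) ≤ L_W(θ_t) − (1/m)(η/2 − Mη²/(2m)) ‖G_W + γ_t G_C‖², so L_W strictly decreases unless G_W + γ_t G_C = 0. -/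
open InnerProductSpace

lemma descent_lemma {n : ℕ} (f : EuclideanSpace ℝ (Fin n) → ℝ) (M : ℝ)
    (hf : Differentiable ℝ f)
    (hlip : ∀ x y, ‖gradient f x - gradient f y‖ ≤ M * ‖x - y‖)
    (x v : EuclideanSpace ℝ (Fin n)) :
    f (x + v) ≤ f x + inner ℝ (gradient f x) v + M / 2 * ‖v‖ ^ 2 := by
  have hfd : ∀ y : EuclideanSpace ℝ (Fin n), fderiv ℝ f y v = inner ℝ (gradient f y) v := by
    intro y
    have h := ((hf y).hasGradientAt.hasFDerivAt).fderiv
    rw [h, InnerProductSpace.toDual_apply_apply]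
  set φ : ℝ → ℝ := fun t => f (x + t • v) - t * inner ℝ (gradient f x) v - M * t ^ 2 / 2 * ‖v‖ ^ 2 with hφ
  have hderiv : ∀ t : ℝ, HasDerivAt φ
      ((inner ℝ (gradient f (x + t • v)) v : ℝ) - inner ℝ (gradient f x) v - M * t * ‖v‖ ^ 2) t := by
    intro t
    have h1 : HasDerivAt (fun t : ℝ => x + t • v) v t := by
      simpa using ((hasDerivAt_id t).smul_const v).const_add x
    have h2 : HasDerivAt (fun t : ℝ => f (x + t • v)) (fderiv ℝ f (x + t • v) v) t :=
      (hf (x + t • v)).hasFDerivAt.comp_hasDerivAt t h1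
    rw [hfd] at h2
    have h3 : HasDerivAt (fun t : ℝ => t * (inner ℝ (gradient f x) v : ℝ))
        (inner ℝ (gradient f x) v : ℝ) t := by simpa using (hasDerivAt_id t).mul_const _
    have h4 : HasDerivAt (fun t : ℝ => M * t ^ 2 / 2 * ‖v‖ ^ 2) (M * t * ‖v‖ ^ 2) t := by
      have : HasDerivAt (fun t : ℝ => t ^ 2) (2 * t) t := by simpa using hasDerivAt_pow 2 t
      have := ((this.const_mul M).div_const 2).mul_const (‖v‖ ^ 2)
      rw [show M * t * ‖v‖ ^ 2 = M * (2 * t) / 2 * ‖v‖ ^ 2 by ring]; exact this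
    exact (h2.sub h3).sub h4
  have hanti : AntitoneOn φ (Set.Icc 0 1) := by
    apply antitoneOn_of_deriv_nonpos (convex_Icc 0 1)
    · exact (Differentiable.continuous (fun t => (hderiv t).differentiableAt)).continuousOn
    · intro t ht
      exact (hderiv t).differentiableAt.differentiableWithinAt
    · intro t ht
      rw [(hderiv t).deriv]
      rw [interior_Icc] at ht
      have key : (inner ℝ (gradient f (x + t • v)) v : ℝ) - inner ℝ (gradient f x) v
          ≤ M * t * ‖v‖ ^ 2 := by
        calc (inner ℝ (gradient f (x + t • v)) v : ℝ) - inner ℝ (gradient f x) v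
            = inner ℝ (gradient f (x + t • v) - gradient f x) v := by
              rw [inner_sub_left]
          _ ≤ ‖gradient f (x + t • v) - gradient f x‖ * ‖v‖ := real_inner_le_norm _ _
          _ ≤ M * ‖(x + t • v) - x‖ * ‖v‖ :=
              mul_le_mul_of_nonneg_right (hlip _ _) (norm_nonneg v)
          _ = M * t * ‖v‖ ^ 2 := by
              rw [add_sub_cancel_left, norm_smul, Real.norm_eq_abs, abs_of_pos ht.1]; ring
      linarith
  have h01 := hanti (Set.mem_Icc.mpr ⟨le_refl 0, zero_le_one⟩) (Set.mem_Icc.mpr ⟨zero_le_one, le_refl 1⟩) zero_le_one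
  have h0 : φ 0 = f x := by simp [hφ]
  have h1 : φ 1 = f (x + v) - inner ℝ (gradient f x) v - M / 2 * ‖v‖ ^ 2 := by
    simp only [hφ, one_smul, one_pow, one_mul]; ring
  rw [h0, h1] at h01
  linarith

/-- DSGD descent step on `L_W`: with `M`-Lipschitz gradient, `γ_t ∈ (0,1]`,
`‖G_W‖² ≥ γ_t²‖G_C‖²` and `0 < η < m/M`, the update
`θ_{t+1} = θ_t − (η/m)(G_W + γ_t G_C)` satisfies
`L_W(θ_{t+1}) ≤ L_W(θ_t) − (1/m)(η/2 − Mη²/(2m))‖G_W + γ_t G_C‖²`,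
with strict decrease unless `G_W + γ_t G_C = 0`. -/
theorem stmt8 {n : ℕ} (LW : EuclideanSpace ℝ (Fin n) → ℝ) (M η m γ : ℝ)
    (hLW : Differentiable ℝ LW)
    (hlip : ∀ x y, ‖gradient LW x - gradient LW y‖ ≤ M * ‖x - y‖)
    (θt : EuclideanSpace ℝ (Fin n)) (GC : EuclideanSpace ℝ (Fin n))
    (hγ : γ ∈ Set.Ioc (0 : ℝ) 1)
    (hG : ‖gradient LW θt‖ ^ 2 ≥ γ ^ 2 * ‖GC‖ ^ 2)
    (hm : 0 < m) (hη : 0 < η) (hηM : η < m / M)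
    (θt1 : EuclideanSpace ℝ (Fin n))
    (hθ : θt1 = θt - (η / m) • (gradient LW θt + γ • GC)) :
    LW θt1 ≤ LW θt - (1 / m) * (η / 2 - M * η ^ 2 / (2 * m)) * ‖gradient LW θt + γ • GC‖ ^ 2
    ∧ (gradient LW θt + γ • GC ≠ 0 → LW θt1 < LW θt) := by
  have hM : 0 < M := by
    by_contra h
    push_neg at h
    rcases lt_or_eq_of_le h with h | h
    · have : m / M < 0 := div_neg_of_pos_of_neg hm h
      linarith
    · rw [h, div_zero] at hηM; linarith
  set G := gradient LW θt with hGdef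
  set S := G + γ • GC with hSdef
  have hv : θt1 = θt + (-(η / m)) • S := by
    rw [hθ, neg_smul, ← sub_eq_add_neg]
  have hdesc := descent_lemma LW M hLW hlip θt ((-(η / m)) • S)
  rw [← hv] at hdesc
  -- inner products
  have hGS : (inner ℝ G S : ℝ) ≥ ‖S‖ ^ 2 / 2 := by
    have e1 : ‖S‖ ^ 2 = ‖G‖ ^ 2 + 2 * γ * inner ℝ G GC + γ ^ 2 * ‖GC‖ ^ 2 := by
      rw [hSdef]
      simp only [norm_add_sq_real, norm_smul, real_inner_smul_right, Real.norm_eq_abs,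
        mul_pow, sq_abs]
      ring
    have e2 : (inner ℝ G S : ℝ) = ‖G‖ ^ 2 + γ * inner ℝ G GC := by
      rw [hSdef, inner_add_right, real_inner_smul_right, real_inner_self_eq_norm_sq]
    nlinarith [hG]
  have hIv : (inner ℝ G ((-(η / m)) • S) : ℝ) = -(η / m) * inner ℝ G S := real_inner_smul_right _ _ _
  have hNv : ‖(-(η / m)) • S‖ ^ 2 = (η / m) ^ 2 * ‖S‖ ^ 2 := by
    rw [norm_smul, Real.norm_eq_abs, abs_neg, abs_of_pos (div_pos hη hm), mul_pow]
  rw [hIv, hNv] at hdesc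
  have hηm : 0 < η / m := div_pos hη hm
  have key : LW θt1 ≤ LW θt - (1 / m) * (η / 2 - M * η ^ 2 / (2 * m)) * ‖S‖ ^ 2 := by
    have h2 : -(η / m) * inner ℝ G S ≤ -(η / m) * (‖S‖ ^ 2 / 2) := by
      have := mul_le_mul_of_nonneg_left hGS (le_of_lt hηm)
      linarith
    have heq : LW θt + -(η / m) * (‖S‖ ^ 2 / 2) + M / 2 * ((η / m) ^ 2 * ‖S‖ ^ 2)
        = LW θt - (1 / m) * (η / 2 - M * η ^ 2 / (2 * m)) * ‖S‖ ^ 2 := by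
      field_simp
      ring
    linarith
  refine ⟨key, fun hne => ?_⟩
  have hSpos : 0 < ‖S‖ ^ 2 := pow_pos (norm_pos_iff.mpr hne) 2
  have hcoef : 0 < (1 / m) * (η / 2 - M * η ^ 2 / (2 * m)) := by
    have hMη : η * M < m := (lt_div_iff₀ hM).mp hηM
    have hsub : 0 < η / 2 - M * η ^ 2 / (2 * m) := by
      rw [sub_pos, div_lt_div_iff₀ (by linarith) (by norm_num)]
      nlinarith
    positivity
  calc LW θt1 ≤ LW θt - (1 / m) * (η / 2 - M * η ^ 2 / (2 * m)) * ‖S‖ ^ 2 := key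
    _ < LW θt := by nlinarith
end

section
/- Let L_W be differentiable with M-Lipschitz gradient, and suppose θ_{t+1} = θ_t (a stalled DSGD step with G_W + γ_t G_C = 0 at θ_t). If γ_{t+1} ≠ γ_t, ‖G_W‖² ≥ γ_{t+1}²‖G_C‖², and 0 < η < m/M, then the next step θ_{t+2} = θ_{t+1} − (η/m)(G_W + γ_{t+1}G_C) satisfies L_W(θ_{t+2}) ≤ L_W(θ_t) − (1/m)(η/2 − Mη²/(2m))‖G_W + γ_{t+1}G_C‖², and this quantity is strictly negative unless G_W = G_C = 0. -/
set_option maxHeartbeats 1000000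

open InnerProductSpace

lemma descent_aux {n : ℕ} (f : EuclideanSpace ℝ (Fin n) → ℝ) (M : ℝ)
    (hf : Differentiable ℝ f)
    (hlip : ∀ x y, ‖gradient f x - gradient f y‖ ≤ M * ‖x - y‖)
    (x v : EuclideanSpace ℝ (Fin n)) :
    f (x + v) ≤ f x + ⟪gradient f x, v⟫_ℝ + M / 2 * ‖v‖ ^ 2 := by
  set g := fun y => gradient f y with hg
  set ψ : ℝ → ℝ := fun t => f (x + t • v) - t * ⟪g x, v⟫_ℝ - M * t ^ 2 / 2 * ‖v‖ ^ 2 with hψ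
  have hc : ∀ t : ℝ, HasDerivAt (fun t : ℝ => x + t • v) v t := by
    intro t
    simpa using ((hasDerivAt_id t).smul_const v).const_add x
  have hd : ∀ t : ℝ, HasDerivAt ψ (⟪g (x + t • v), v⟫_ℝ - ⟪g x, v⟫_ℝ - M * t * ‖v‖ ^ 2) t := by
    intro t
    have h1 : HasDerivAt (fun t : ℝ => f (x + t • v)) (⟪g (x + t • v), v⟫_ℝ) t := by
      have := ((hf (x + t • v)).hasGradientAt.hasFDerivAt).comp_hasDerivAt t (hc t)
      rw [InnerProductSpace.toDual_apply_apply] at this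
      exact this
    have h2 : HasDerivAt (fun t : ℝ => t * ⟪g x, v⟫_ℝ) (⟪g x, v⟫_ℝ) t := by
      simpa using (hasDerivAt_id t).mul_const _
    have h3 : HasDerivAt (fun t : ℝ => M * t ^ 2 / 2 * ‖v‖ ^ 2) (M * t * ‖v‖ ^ 2) t := by
      have : HasDerivAt (fun t : ℝ => t ^ 2) (2 * t) t := by
        simpa using hasDerivAt_pow 2 t
      have := ((this.const_mul M).div_const 2).mul_const (‖v‖ ^ 2)
      rw [show M * t * ‖v‖ ^ 2 = M * (2 * t) / 2 * ‖v‖ ^ 2 by ring]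
      exact this
    exact (h1.sub h2).sub h3
  have hmono : AntitoneOn ψ (Set.Icc 0 1) := by
    apply antitoneOn_of_deriv_nonpos (convex_Icc 0 1)
    · exact Continuous.continuousOn (by
        have : Continuous ψ := by
          apply Continuous.sub
          apply Continuous.sub
          · exact hf.continuous.comp (by continuity)
          · continuity
          · continuity
        exact this)
    · intro t ht
      exact ((hd t).differentiableAt).differentiableWithinAt
    · intro t ht
      rw [interior_Icc] at ht
      rw [(hd t).deriv]
      have h4 : ⟪g (x + t • v), v⟫_ℝ - ⟪g x, v⟫_ℝ = ⟪g (x + t • v) - g x, v⟫_ℝ := by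
        rw [inner_sub_left]
      rw [h4]
      have h5 : ⟪g (x + t • v) - g x, v⟫_ℝ ≤ ‖g (x + t • v) - g x‖ * ‖v‖ :=
        real_inner_le_norm _ _
      have h6 : ‖g (x + t • v) - g x‖ ≤ M * (t * ‖v‖) := by
        have := hlip (x + t • v) x
        simpa [norm_smul, abs_of_pos ht.1] using this
      nlinarith [norm_nonneg v, mul_le_mul_of_nonneg_right h6 (norm_nonneg v)]
  have := hmono (Set.left_mem_Icc.2 zero_le_one) (Set.right_mem_Icc.2 zero_le_one) zero_le_one
  simp only [hψ] at this
  simp only [zero_smul, add_zero, one_smul, zero_mul, zero_pow, mul_zero, sub_zero,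
    one_pow, mul_one, zero_div] at this
  linarith
/-- Escape mechanism of DSGD from a stalled step: if `G_W + γ_t G_C = 0` at `θ_t`
(so `θ_{t+1} = θ_t`), `γ_{t+1} ≠ γ_t` are positive, `‖G_W‖² ≥ γ_{t+1}²‖G_C‖²` and
`0 < η < m/M`, then the next step satisfies the descent inequality, whose decrement is
strictly positive unless `G_W = G_C = 0`. -/
theorem stmt16 {n : ℕ} (LW : EuclideanSpace ℝ (Fin n) → ℝ) (M η m γt γt1 : ℝ)
    (hLW : Differentiable ℝ LW)
    (hlip : ∀ x y, ‖gradient LW x - gradient LW y‖ ≤ M * ‖x - y‖)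
    (θt : EuclideanSpace ℝ (Fin n)) (GC : EuclideanSpace ℝ (Fin n))
    (hγt : 0 < γt) (hγt1 : 0 < γt1) (hne : γt1 ≠ γt)
    (hstall : gradient LW θt + γt • GC = 0)
    (hG : ‖gradient LW θt‖ ^ 2 ≥ γt1 ^ 2 * ‖GC‖ ^ 2)
    (hm : 0 < m) (hη : 0 < η) (hηM : η < m / M)
    (θt2 : EuclideanSpace ℝ (Fin n))
    (hθ : θt2 = θt - (η / m) • (gradient LW θt + γt1 • GC)) :
    LW θt2 ≤ LW θt - (1 / m) * (η / 2 - M * η ^ 2 / (2 * m)) * ‖gradient LW θt + γt1 • GC‖ ^ 2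
    ∧ (¬(gradient LW θt = 0 ∧ GC = 0) →
        LW θt - (1 / m) * (η / 2 - M * η ^ 2 / (2 * m)) * ‖gradient LW θt + γt1 • GC‖ ^ 2
          < LW θt) := by
  have hM : 0 < M := by
    by_contra h
    push_neg at h
    rcases lt_or_eq_of_le h with h | h
    · have : m / M ≤ 0 := div_nonpos_of_nonneg_of_nonpos hm.le h.le
      linarith
    · rw [h, div_zero] at hηM; linarith
  have hηm : η * M < m := by
    rw [lt_div_iff₀ hM] at hηM; linarith [hηM]
  set g := gradient LW θt with hg
  set G := g + γt1 • GC with hGdef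
  -- inner product facts
  have hinner : ⟪g, G⟫_ℝ = ‖g‖ ^ 2 + γt1 * ⟪g, GC⟫_ℝ := by
    rw [hGdef, inner_add_right, real_inner_smul_right, real_inner_self_eq_norm_sq]
  have hnormG : ‖G‖ ^ 2 = ‖g‖ ^ 2 + 2 * (γt1 * ⟪g, GC⟫_ℝ) + γt1 ^ 2 * ‖GC‖ ^ 2 := by
    rw [hGdef, ← real_inner_self_eq_norm_sq, inner_add_add_self]
    simp only [real_inner_smul_left, real_inner_smul_right, real_inner_self_eq_norm_sq,
      real_inner_comm GC g, norm_smul, Real.norm_eq_abs, mul_pow, sq_abs]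
    ring
  have hkey : ⟪g, G⟫_ℝ ≥ (1 / 2) * ‖G‖ ^ 2 := by
    rw [hinner, hnormG]; nlinarith [hG]
  -- descent
  have hdesc := descent_aux LW M hLW hlip θt (-((η / m) • G))
  have hx : θt + -((η / m) • G) = θt2 := by rw [hθ]; abel
  rw [hx] at hdesc
  have hiv : ⟪g, -((η / m) • G)⟫_ℝ = -(η / m) * ⟪g, G⟫_ℝ := by
    rw [inner_neg_right, real_inner_smul_right]; ring
  have hnv : ‖-((η / m) • G)‖ ^ 2 = (η / m) ^ 2 * ‖G‖ ^ 2 := by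
    rw [norm_neg, norm_smul]
    rw [Real.norm_eq_abs, abs_of_pos (div_pos hη hm)]
    ring
  rw [hiv, hnv] at hdesc
  have hGnn : (0:ℝ) ≤ ‖G‖ ^ 2 := by positivity
  constructor
  · have h1 : -(η / m) * ⟪g, G⟫_ℝ ≤ -(η / m) * ((1 / 2) * ‖G‖ ^ 2) := by
      apply mul_le_mul_of_nonpos_left hkey
      have : 0 < η / m := div_pos hη hm
      linarith
    calc LW θt2 ≤ LW θt + -(η / m) * ⟪g, G⟫_ℝ + M / 2 * ((η / m) ^ 2 * ‖G‖ ^ 2) := hdesc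
      _ ≤ LW θt + -(η / m) * ((1 / 2) * ‖G‖ ^ 2) + M / 2 * ((η / m) ^ 2 * ‖G‖ ^ 2) := by linarith
      _ = LW θt - 1 / m * (η / 2 - M * η ^ 2 / (2 * m)) * ‖G‖ ^ 2 := by
          field_simp; ring
  · intro hne0
    have hGne : G ≠ 0 := by
      intro hG0
      apply hne0
      have hgc : GC = 0 := by
        have h1 : g = -(γt • GC) := by
          linear_combination (norm := module) hstall
        have h2 : g = -(γt1 • GC) := by
          rw [hGdef] at hG0
          linear_combination (norm := module) hG0
        have h3 : (γt - γt1) • GC = 0 := by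
          rw [h1] at h2
          have : γt • GC = γt1 • GC := by
            have := neg_injective h2
            exact this
          rw [sub_smul, this, sub_self]
        rcases smul_eq_zero.1 h3 with h | h
        · exact absurd (sub_eq_zero.1 h).symm hne
        · exact h
      constructor
      · rw [hGdef, hgc, smul_zero, add_zero] at hG0; exact hG0
      · exact hgc
    have hGpos : 0 < ‖G‖ ^ 2 := by
      have : 0 < ‖G‖ := norm_pos_iff.2 hGne
      positivity
    have hcpos : 0 < 1 / m * (η / 2 - M * η ^ 2 / (2 * m)) := by
      apply mul_pos (by positivity)
      rw [sub_pos, div_lt_iff₀ (by positivity)]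
      ring_nf
      nlinarith [hηm, hη]
    nlinarith [mul_pos hcpos hGpos]
end
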